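/- The action of the nonzero quaternions on the purely imaginary quaternions by a · c := conj(a) · c · a is transitive on the nonzero purely imaginary quaternions; consequently any two nonzero purely imaginary quaternions c, c' satisfy c' = conj(a) · c · a for some nonzero quaternion a. -/

import Mathlib

open Quaternion

private lemma pure_sq' (c : Quaternion ℝ) (h : c.re = 0) :
    c * c = -((normSq c : ℝ) • (1 : Quaternion ℝ)) := by
  have := (Quaternion.sq_eq_neg_normSq (a := c)).mpr h
  rw [sq] at this
  rw [this, ← Quaternion.coe_one, Quaternion.smul_coe, mul_one]

private lemma key' (c c' b : Quaternion ℝ) (hb : b ≠ 0) (l : ℝ) (hl : 0 < l)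
    (h : star b * c * b = l • c') :
    ∃ a : Quaternion ℝ, a ≠ 0 ∧ c' = star a * c * a := by
  have hs : Real.sqrt l ≠ 0 := by positivity
  refine ⟨(Real.sqrt l)⁻¹ • b, by simp [hb, hs], ?_⟩
  have hst : star ((Real.sqrt l)⁻¹ • b) = (Real.sqrt l)⁻¹ • star b := by
    rw [Quaternion.star_smul]
  rw [hst, smul_mul_assoc, smul_mul_assoc, mul_smul_comm, h]
  match_scalars
  field_simp
  exact Real.sq_sqrt hl.le

private lemma key'' (c c' b : Quaternion ℝ) (hb : b ≠ 0) (l m : ℝ) (hl : 0 < l)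
    (hm : 0 < m) (h : l • (star b * c * b) = m • c') :
    ∃ a : Quaternion ℝ, a ≠ 0 ∧ c' = star a * c * a := by
  refine key' c c' b hb (l⁻¹ * m) (by positivity) ?_
  have := congrArg (fun x => (l⁻¹ : ℝ) • x) h
  simp only [smul_smul, inv_mul_cancel₀ hl.ne', one_smul] at this
  exact this

private lemma anticomm_exists (c : Quaternion ℝ) (hc : c.re = 0) :
    ∃ w : Quaternion ℝ, w ≠ 0 ∧ w.re = 0 ∧ c * w = -(w * c) := by
  by_cases h : c.imI = 0 ∧ c.imJ = 0
  · refine ⟨⟨0, 1, 0, 0⟩, ?_, rfl, ?_⟩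
    · intro hw
      have := congrArg QuaternionAlgebra.imI hw
      simp at this
    · set w : Quaternion ℝ := ⟨0, 1, 0, 0⟩ with hw
      obtain ⟨h1, h2, h3, h4⟩ : w.re = 0 ∧ w.imI = 1 ∧ w.imJ = 0 ∧ w.imK = 0 := ⟨rfl, rfl, rfl, rfl⟩
      clear_value w
      apply Quaternion.ext <;> simp [Quaternion.re_mul, Quaternion.imI_mul, Quaternion.imJ_mul,
        Quaternion.imK_mul, hc, h.1, h.2, h1, h2, h3, h4]
  · refine ⟨⟨0, -c.imJ, c.imI, 0⟩, ?_, rfl, ?_⟩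
    · intro hw
      apply h
      constructor
      · have := congrArg QuaternionAlgebra.imJ hw; simpa using this
      · have := congrArg QuaternionAlgebra.imI hw; simpa using this
    · set w : Quaternion ℝ := ⟨0, -c.imJ, c.imI, 0⟩ with hw
      obtain ⟨h1, h2, h3, h4⟩ : w.re = 0 ∧ w.imI = -c.imJ ∧ w.imJ = c.imI ∧ w.imK = 0 :=
        ⟨rfl, rfl, rfl, rfl⟩
      clear_value w
      apply Quaternion.ext <;> simp [Quaternion.re_mul, Quaternion.imI_mul, Quaternion.imJ_mul,
        Quaternion.imK_mul, hc, h1, h2, h3, h4] <;> ring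

/-- The action of the nonzero quaternions on the purely imaginary
quaternions by a · c := conj(a) · c · a is transitive on the nonzero purely
imaginary quaternions: any two nonzero purely imaginary quaternions c, c'
satisfy c' = conj(a) · c · a for some nonzero quaternion a. -/
theorem stmt2 (c c' : Quaternion ℝ) (hc : c.re = 0) (hc' : c'.re = 0)
    (hc0 : c ≠ 0) (hc'0 : c' ≠ 0) :
    ∃ a : Quaternion ℝ, a ≠ 0 ∧ c' = star a * c * a := by
  have hnc : (0:ℝ) < normSq c := lt_of_le_of_ne (Quaternion.normSq_nonneg) (by
    symm; exact Quaternion.normSq_ne_zero.mpr hc0)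
  have hnc' : (0:ℝ) < normSq c' := lt_of_le_of_ne (Quaternion.normSq_nonneg) (by
    symm; exact Quaternion.normSq_ne_zero.mpr hc'0)
  set r : ℝ := Real.sqrt (normSq c) with hr
  set r' : ℝ := Real.sqrt (normSq c') with hr'
  have hrpos : 0 < r := Real.sqrt_pos.mpr hnc
  have hr'pos : 0 < r' := Real.sqrt_pos.mpr hnc'
  have hrsq : r * r = normSq c := Real.mul_self_sqrt hnc.le
  have hr'sq : r' * r' = normSq c' := Real.mul_self_sqrt hnc'.le
  set b : Quaternion ℝ := r' • c + r • c' with hb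
  by_cases hb0 : b = 0
  · -- c' is a negative multiple of c; use an anticommuting w
    obtain ⟨w, hw0, hwre, hwc⟩ := anticomm_exists c hc
    have hnw : (0:ℝ) < normSq w := lt_of_le_of_ne (Quaternion.normSq_nonneg) (by
      symm; exact Quaternion.normSq_ne_zero.mpr hw0)
    have hstarw : star w = -w := Quaternion.star_eq_neg.mpr hwre
    have hwsq := pure_sq' w hwre
    have hr'c : r' • c = -(r • c') := by
      rw [hb] at hb0
      linear_combination (norm := module) hb0
    refine key'' c c' w hw0 r' (normSq w * r) hr'pos (mul_pos hnw hrpos) ?_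
    have e1 : star w * c * w = w * w * c := by
      rw [hstarw, show -w * c * w = -(w * (c * w)) by noncomm_ring, hwc]
      noncomm_ring
    rw [e1, hwsq, neg_mul, smul_mul_assoc, one_mul, smul_neg, smul_comm, hr'c]
    module
  · -- main case: b works
    have hbre : b.re = 0 := by simp [hb, hc, hc']
    have hstarb : star b = -b := Quaternion.star_eq_neg.mpr hbre
    have hcsq := pure_sq' c hc
    have hc'sq := pure_sq' c' hc'
    have hbsq := pure_sq' b hbre
    -- key identity: r' • (c * b) = r • (b * c')
    have hkey : r' • (c * b) = r • (b * c') := by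
      rw [hb, mul_add, add_mul, mul_smul_comm, mul_smul_comm, smul_mul_assoc, smul_mul_assoc,
        hcsq, hc'sq, ← hrsq, ← hr'sq]
      module
    have hnb : (0:ℝ) < normSq b := lt_of_le_of_ne (Quaternion.normSq_nonneg) (by
      symm; exact Quaternion.normSq_ne_zero.mpr hb0)
    refine key'' c c' b hb0 r' (r * normSq b) hr'pos (mul_pos hrpos hnb) ?_
    have e1 : star b * c * b = -(b * (c * b)) := by rw [hstarb]; noncomm_ring
    rw [e1, smul_neg, ← mul_smul_comm, hkey, mul_smul_comm, ← mul_assoc, hbsq,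
      neg_mul, smul_mul_assoc, one_mul]
    module
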